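/- Let α be strictly increasing with α_n > 1 and α_n → ∞. The following assertions are equivalent: (a) lim_{n→∞} (log n)/α_n = 0; (b) the set of eigenvalues of the Cesàro operator C on Λ₀(α) equals Σ = {1/m : m ≥ 1}; (c) C has an eigenvalue on Λ₀(α) different from 1. -/

import Mathlib

open Filter Finset Topology

noncomputable section

/-- The weight `w_k(n) = e^{-alpha_n / k}`.  Indices are shifted by one: the natural
numbers `k n : Nat` represent the indices `k+1` and `n+1` (both running from `1`). -/
def wt (a : ℕ → ℝ) (k n : ℕ) : ℝ := Real.exp (-(a n) / ((k : ℝ) + 1))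

/-- Membership in the power series space of finite type `Λ₀(α)`:
`x ∈ Λ₀(α)` iff `w_k(n)|x_n| → 0` for every `k ≥ 1`. -/
def memLambda (a : ℕ → ℝ) (x : ℕ → ℂ) : Prop :=
  ∀ k : ℕ, Tendsto (fun n => wt a k n * ‖x n‖) atTop (𝓝 0)

/-- The norm `p_k(x) = sup_n w_k(n)|x_n|` generating the Fréchet topology of `Λ₀(α)`. -/
def pk (a : ℕ → ℝ) (k : ℕ) (x : ℕ → ℂ) : ℝ := ⨆ n : ℕ, wt a k n * ‖x n‖

/-- The discrete Cesàro operator `(C x)_n = (x_1 + ⋯ + x_n)/n` (0-indexed). -/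
def cesaro (x : ℕ → ℂ) : ℕ → ℂ := fun n => (∑ i ∈ Finset.range (n + 1), x i) / ((n : ℂ) + 1)

/-- `lam` is an eigenvalue of the Cesàro operator on `Λ₀(α)`. -/
def IsEigen (a : ℕ → ℝ) (lam : ℂ) : Prop :=
  ∃ x : ℕ → ℂ, memLambda a x ∧ x ≠ 0 ∧ cesaro x = lam • x

/-! ### Auxiliary lemmas -/

/-- Hockey-stick identity, cast to `ℂ`. -/
lemma hockey (m n : ℕ) :
    ∑ i ∈ Finset.range (n + 1), ((i.choose m : ℕ) : ℂ) = ((n + 1).choose (m + 1) : ℂ) := by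
  induction n with
  | zero => simp [Nat.choose_succ_succ]
  | succ n ih =>
      rw [Finset.sum_range_succ, ih]
      norm_cast
      rw [Nat.choose_succ_succ (n + 1) m, Nat.add_comm]

/-- Lower bound for binomial coefficients: `C(n,m) ≥ n - m + 1` for `1 ≤ m ≤ n`. -/
lemma choose_lb {m : ℕ} (hm : 1 ≤ m) : ∀ n, m ≤ n → n - m + 1 ≤ n.choose m := by
  intro n
  induction n with
  | zero => intro h; exact absurd h (by omega)
  | succ n ih =>
      intro h
      by_cases hc : m = n + 1
      · subst hc; simp
      · have hmn : m ≤ n := by omega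
        have pasc : (n + 1).choose m = n.choose (m - 1) + n.choose m := by
          have h2 := Nat.choose_succ_succ n (m - 1)
          simp only [Nat.succ_eq_add_one, Nat.sub_add_cancel hm] at h2
          exact h2
        have pos : 1 ≤ n.choose (m - 1) := Nat.choose_pos (by omega)
        have := ih hmn
        omega

/-- The binomial sequence `n ↦ C(n,m)` is an eigenvector of the Cesàro operator
for the eigenvalue `1/(m+1)`. -/
lemma cesaro_choose (m : ℕ) :
    cesaro (fun n => ((n.choose m : ℕ) : ℂ)) = (1 / ((m : ℂ) + 1)) • (fun n => ((n.choose m : ℕ) : ℂ)) := by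
  funext n
  simp only [cesaro, Pi.smul_apply, smul_eq_mul]
  rw [hockey]
  have h1 : ((n : ℂ) + 1) ≠ 0 := Nat.cast_add_one_ne_zero n
  have h2 : ((m : ℂ) + 1) ≠ 0 := Nat.cast_add_one_ne_zero m
  have key : ((n : ℂ) + 1) * ((n.choose m : ℕ) : ℂ)
      = (((n + 1).choose (m + 1) : ℕ) : ℂ) * ((m : ℂ) + 1) := by
    have h := Nat.add_one_mul_choose_eq n m
    exact_mod_cast congrArg (Nat.cast : ℕ → ℂ) h
  field_simp
  linear_combination -key

lemma eigen_rec {lam : ℂ} {x : ℕ → ℂ} (hx : cesaro x = lam • x) (n : ℕ) :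
    ∑ i ∈ Finset.range (n + 1), x i = lam * ((n : ℂ) + 1) * x n := by
  have h := congrFun hx n
  simp only [cesaro, Pi.smul_apply, smul_eq_mul] at h
  have hne : ((n : ℂ) + 1) ≠ 0 := Nat.cast_add_one_ne_zero n
  field_simp at h
  rw [h]; ring

lemma eigen_step {lam : ℂ} {x : ℕ → ℂ} (hx : cesaro x = lam • x) (n : ℕ) :
    x (n + 1) * (lam * ((n : ℂ) + 2) - 1) = lam * ((n : ℂ) + 1) * x n := by
  have h1 := eigen_rec hx n
  have h2 := eigen_rec hx (n + 1)
  rw [Finset.sum_range_succ, h1] at h2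
  push_cast at h2
  linear_combination -h2

/-- Every eigenvalue of the Cesàro operator on `Λ₀(α)` is of the form `1/(m+1)`. -/
lemma eigen_val {a : ℕ → ℝ} {lam : ℂ} (h : IsEigen a lam) :
    ∃ m : ℕ, lam = 1 / ((m : ℂ) + 1) := by
  by_contra hc
  push_neg at hc
  obtain ⟨x, -, hx0, hx⟩ := h
  have key : ∀ t : ℕ, lam * ((t : ℂ) + 1) ≠ 1 := by
    intro t ht
    apply hc t
    have hne : ((t : ℂ) + 1) ≠ 0 := Nat.cast_add_one_ne_zero t
    field_simp
    linear_combination ht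
  apply hx0
  funext n
  show x n = 0
  induction n with
  | zero =>
      have h0 := eigen_rec hx 0
      rw [Finset.sum_range_one] at h0
      have k0 : lam - 1 ≠ 0 := sub_ne_zero.mpr (by simpa using key 0)
      have hz : x 0 * (lam - 1) = 0 := by push_cast at h0; linear_combination -h0
      exact (mul_eq_zero.mp hz).resolve_right k0
  | succ n ih =>
      have hs := eigen_step hx n
      rw [ih, mul_zero] at hs
      have hne : lam * ((n : ℂ) + 2) - 1 ≠ 0 := by
        intro hcon
        apply key (n + 1)
        push_cast
        linear_combination hcon
      exact (mul_eq_zero.mp hs).resolve_right hne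

/-- Any eigenvector for the eigenvalue `1/(m+1)`, `m ≥ 1`, is a multiple of the
binomial sequence. -/
lemma eigen_formula {x : ℕ → ℂ} {m : ℕ} (hm : 1 ≤ m)
    (hx : cesaro x = (1 / ((m : ℂ) + 1)) • x) (n : ℕ) :
    x n = x m * ((n.choose m : ℕ) : ℂ) := by
  have hM : ((m : ℂ) + 1) ≠ 0 := Nat.cast_add_one_ne_zero m
  induction n with
  | zero =>
      have h0 := eigen_rec hx 0
      rw [Finset.sum_range_one] at h0
      have hlam : (1 / ((m : ℂ) + 1)) * ((0 : ℂ) + 1) - 1 ≠ 0 := by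
        intro h
        have hm0 : m = 0 := by
          rw [zero_add, mul_one, sub_eq_zero, one_div, inv_eq_one] at h
          have hm' : (m : ℂ) = 0 := by linear_combination h
          exact_mod_cast hm'
        omega
      have hz : x 0 * ((1 / ((m : ℂ) + 1)) * ((0 : ℂ) + 1) - 1) = 0 := by linear_combination -h0
      have hx0 : x 0 = 0 := (mul_eq_zero.mp hz).resolve_right hlam
      rw [hx0, Nat.choose_eq_zero_of_lt hm]
      simp
  | succ n ih =>
      have hs2 : x (n + 1) * (((n : ℂ) + 2) - ((m : ℂ) + 1)) = ((n : ℂ) + 1) * x n := by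
        have h := eigen_step hx n
        field_simp at h
        linear_combination h
      by_cases hnm : n + 1 = m
      · subst hnm
        simp [Nat.choose_self]
      · have hcne : ((n : ℂ) + 1) - (m : ℂ) ≠ 0 := by
          intro h
          apply hnm
          have h2 : (((n + 1 : ℕ)) : ℂ) = (m : ℂ) := by push_cast; linear_combination h
          exact_mod_cast h2
        have hid : ((n : ℂ) + 1) * ((n.choose m : ℕ) : ℂ)
            = (((n + 1).choose m : ℕ) : ℂ) * (((n : ℂ) + 1) - (m : ℂ)) := by
          rcases lt_or_ge (n + 1) m with hlt | hge
          · have c1 : n.choose m = 0 := Nat.choose_eq_zero_of_lt (by omega)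
            have c2 : (n + 1).choose m = 0 := Nat.choose_eq_zero_of_lt hlt
            simp [c1, c2]
          · have h := Nat.choose_mul_succ_eq n m
            have h2 := congrArg (Nat.cast : ℕ → ℂ) h
            push_cast [Nat.cast_sub (by omega : m ≤ n + 1)] at h2
            linear_combination h2
        rw [ih] at hs2
        have key2 : x (n + 1) * (((n : ℂ) + 1) - (m : ℂ))
            = x m * (((n + 1).choose m : ℕ) : ℂ) * (((n : ℂ) + 1) - (m : ℂ)) := by
          linear_combination hs2 + x m * hid
        exact mul_right_cancel₀ hcne key2

/-- Under nuclearity, the binomial sequences belong to `Λ₀(α)`. -/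
lemma mem_choose {a : ℕ → ℝ} (h1 : ∀ n, 1 < a n) (htop : Tendsto a atTop atTop)
    (ha : Tendsto (fun n : ℕ => Real.log ((n : ℝ) + 1) / a n) atTop (𝓝 0)) (m : ℕ) :
    memLambda a (fun n => ((n.choose m : ℕ) : ℂ)) := by
  intro k
  set K : ℝ := (k : ℝ) + 1 with hK
  have hKpos : (0 : ℝ) < K := by positivity
  have hg : Tendsto (fun n : ℕ => Real.exp (-(a n) / (0 + 2 * K))) atTop (𝓝 0) := by
    apply Real.tendsto_exp_atBot.comp
    exact Tendsto.atBot_div_const (by positivity) (tendsto_neg_atTop_atBot.comp htop)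
  rw [show (0 : ℝ) + 2 * K = 2 * K by ring] at hg
  apply squeeze_zero' (Eventually.of_forall fun n => by
    unfold wt; positivity) ?_ hg
  have hmul : Tendsto (fun n : ℕ => (m : ℝ) * (Real.log ((n : ℝ) + 1) / a n)) atTop (𝓝 0) := by
    simpa using ha.const_mul (m : ℝ)
  filter_upwards [hmul.eventually_lt_const (by positivity : (0:ℝ) < 1 / (2 * K))] with n hn
  have hapos : 0 < a n := lt_trans one_pos (h1 n)
  have hlog : (m : ℝ) * Real.log ((n : ℝ) + 1) < a n / (2 * K) := by
    calc (m : ℝ) * Real.log ((n : ℝ) + 1) = (m : ℝ) * Real.log ((n : ℝ) + 1) / a n * a n := by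
          field_simp
      _ < 1 / (2 * K) * a n := by
          apply mul_lt_mul_of_pos_right _ hapos
          rw [mul_div_assoc]; exact hn
      _ = a n / (2 * K) := by ring
  have hcb : ((n.choose m : ℕ) : ℝ) ≤ ((n : ℝ) + 1) ^ m := by
    calc ((n.choose m : ℕ) : ℝ) ≤ ((n ^ m : ℕ) : ℝ) := by exact_mod_cast Nat.choose_le_pow n m
      _ ≤ ((n : ℝ) + 1) ^ m := by
          push_cast
          exact pow_le_pow_left₀ (by positivity) (by linarith) m
  have hpow : ((n : ℝ) + 1) ^ m = Real.exp ((m : ℝ) * Real.log ((n : ℝ) + 1)) := by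
    rw [← Real.log_pow]
    rw [Real.exp_log (by positivity)]
  have habs : ‖(((n.choose m : ℕ) : ℂ))‖ = ((n.choose m : ℕ) : ℝ) := by
    simp
  calc wt a k n * ‖(((n.choose m : ℕ) : ℂ))‖
      = Real.exp (-(a n) / K) * ((n.choose m : ℕ) : ℝ) := by rw [habs]; rfl
    _ ≤ Real.exp (-(a n) / K) * Real.exp ((m : ℝ) * Real.log ((n : ℝ) + 1)) := by
        apply mul_le_mul_of_nonneg_left _ (Real.exp_pos _).le
        rw [hpow] at hcb; exact hcb
    _ = Real.exp ((m : ℝ) * Real.log ((n : ℝ) + 1) - a n / K) := by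
        rw [← Real.exp_add]; ring_nf
    _ ≤ Real.exp (-(a n) / (2 * K)) := by
        apply Real.exp_le_exp.mpr
        have heq : a n / (2 * K) - a n / K = -(a n) / (2 * K) := by field_simp; ring
        linarith

/-- the following are equivalent: (a) `(log n)/α_n → 0` (nuclearity of
`Λ₀(α)`); (b) the set of eigenvalues of `C` on `Λ₀(α)` equals `Σ = {1/m : m ≥ 1}`;
(c) `C` has an eigenvalue on `Λ₀(α)` different from `1`. -/
theorem stmt5 (a : ℕ → ℝ) (hmono : StrictMono a) (h1 : ∀ n, 1 < a n)
    (htop : Tendsto a atTop atTop) :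
    [ Tendsto (fun n : ℕ => Real.log ((n : ℝ) + 1) / a n) atTop (𝓝 0),
      {lam : ℂ | IsEigen a lam} = {lam : ℂ | ∃ m : ℕ, lam = 1 / ((m : ℂ) + 1)},
      ∃ lam : ℂ, IsEigen a lam ∧ lam ≠ 1 ].TFAE := by
  tfae_have 1 → 2 := by
    intro ha
    ext lam
    simp only [Set.mem_setOf_eq]
    constructor
    · exact fun h => eigen_val h
    · rintro ⟨m, rfl⟩
      refine ⟨fun n => ((n.choose m : ℕ) : ℂ), mem_choose h1 htop ha m, ?_, cesaro_choose m⟩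
      intro h
      have h2 := congrFun h m
      simp [Nat.choose_self] at h2
  tfae_have 2 → 3 := by
    intro hb
    refine ⟨1 / (((1 : ℕ) : ℂ) + 1), ?_, ?_⟩
    · have hmem : (1 / (((1 : ℕ) : ℂ) + 1)) ∈ {lam : ℂ | ∃ m : ℕ, lam = 1 / ((m : ℂ) + 1)} := ⟨1, rfl⟩
      rw [← hb] at hmem
      exact hmem
    · norm_num
  tfae_have 3 → 1 := by
    rintro ⟨lam, hei, hne1⟩
    obtain ⟨m, rfl⟩ := eigen_val hei
    have hm : 1 ≤ m := by
      rcases Nat.eq_zero_or_pos m with h0 | h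
      · exfalso; apply hne1; rw [h0]; norm_num
      · exact h
    obtain ⟨x, hmem, hx0, hx⟩ := hei
    have hfor := eigen_formula hm hx
    have hxm : x m ≠ 0 := by
      intro h
      apply hx0
      funext n
      show x n = 0
      rw [hfor n, h, zero_mul]
    set c := ‖x m‖ with hc
    have hcpos : 0 < c := norm_pos_iff.mpr hxm
    rw [Metric.tendsto_atTop]
    intro ε hε
    obtain ⟨k, hk⟩ := exists_nat_gt (2 / ε)
    have hkk : 2 / ((k : ℝ) + 1) < ε := by
      rw [div_lt_iff₀ (by positivity)]
      have h2 : 2 < (k : ℝ) * ε := by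
        have := (div_lt_iff₀ hε).mp hk
        linarith
      nlinarith
    have hev1 := (hmem k).eventually_lt_const hcpos
    have hev2 : ∀ᶠ n : ℕ in atTop, (((k : ℝ) + 1) * Real.log 2) < a n :=
      htop.eventually_gt_atTop _
    have hev3 : ∀ᶠ n : ℕ in atTop, 2 * m ≤ n := eventually_ge_atTop (2 * m)
    rw [eventually_atTop] at hev1 hev2 hev3
    obtain ⟨N1, hN1⟩ := hev1
    obtain ⟨N2, hN2⟩ := hev2
    obtain ⟨N3, hN3⟩ := hev3
    refine ⟨N1 + N2 + N3, fun n hn => ?_⟩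
    have e1 := hN1 n (by omega)
    have e2 := hN2 n (by omega)
    have e3 := hN3 n (by omega)
    have hapos : 0 < a n := lt_trans one_pos (h1 n)
    have hKpos : (0 : ℝ) < (k : ℝ) + 1 := by positivity
    -- rewrite |x n|
    have hxn : ‖x n‖ = c * ((n.choose m : ℕ) : ℝ) := by
      rw [hfor n, norm_mul, hc]
      simp
    -- binomial lower bound
    have hcb : ((n : ℝ) + 1) / 2 ≤ ((n.choose m : ℕ) : ℝ) := by
      have hb := choose_lb hm n (by omega)
      have hcast : ((n - m + 1 : ℕ) : ℝ) ≤ ((n.choose m : ℕ) : ℝ) := Nat.cast_le.mpr hb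
      rw [Nat.cast_add, Nat.cast_sub (by omega : m ≤ n), Nat.cast_one] at hcast
      have e3' : 2 * (m : ℝ) ≤ (n : ℝ) := by exact_mod_cast e3
      linarith
    -- main estimate
    have h4 : Real.exp (-(a n) / ((k : ℝ) + 1)) * (c * (((n : ℝ) + 1) / 2)) < c := by
      calc Real.exp (-(a n) / ((k : ℝ) + 1)) * (c * (((n : ℝ) + 1) / 2))
          ≤ Real.exp (-(a n) / ((k : ℝ) + 1)) * (c * ((n.choose m : ℕ) : ℝ)) := by
            apply mul_le_mul_of_nonneg_left _ (Real.exp_pos _).le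
            exact mul_le_mul_of_nonneg_left hcb hcpos.le
        _ = wt a k n * ‖x n‖ := by rw [hxn]; rfl
        _ < c := e1
    have h5 : ((n : ℝ) + 1) < 2 * Real.exp (a n / ((k : ℝ) + 1)) := by
      have hexp : Real.exp (-(a n) / ((k : ℝ) + 1)) = (Real.exp (a n / ((k : ℝ) + 1)))⁻¹ := by
        rw [← Real.exp_neg]; ring_nf
      have h6 : Real.exp (-(a n) / ((k : ℝ) + 1)) * (((n : ℝ) + 1) / 2) < 1 := by
        have := (mul_lt_mul_iff_right₀ hcpos).mp (by
          calc c * (Real.exp (-(a n) / ((k : ℝ) + 1)) * (((n : ℝ) + 1) / 2))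
              = Real.exp (-(a n) / ((k : ℝ) + 1)) * (c * (((n : ℝ) + 1) / 2)) := by ring
            _ < c := h4
            _ = c * 1 := by ring)
        exact this
      rw [hexp, inv_mul_lt_iff₀ (Real.exp_pos _)] at h6
      linarith [h6]
    have hlog : Real.log ((n : ℝ) + 1) < Real.log 2 + a n / ((k : ℝ) + 1) := by
      calc Real.log ((n : ℝ) + 1) < Real.log (2 * Real.exp (a n / ((k : ℝ) + 1))) :=
            Real.log_lt_log (by positivity) h5
        _ = Real.log 2 + a n / ((k : ℝ) + 1) := by
            rw [Real.log_mul (by norm_num) (Real.exp_ne_zero _), Real.log_exp]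
    have hlog2 : Real.log 2 < a n / ((k : ℝ) + 1) := by
      rw [lt_div_iff₀ hKpos]
      calc Real.log 2 * ((k : ℝ) + 1) = ((k : ℝ) + 1) * Real.log 2 := by ring
        _ < a n := e2
    have hfinal : Real.log ((n : ℝ) + 1) / a n < 2 / ((k : ℝ) + 1) := by
      rw [div_lt_iff₀ hapos]
      have heq : 2 / ((k : ℝ) + 1) * a n = a n / ((k : ℝ) + 1) + a n / ((k : ℝ) + 1) := by
        ring
      rw [heq]
      have : a n / ((k : ℝ) + 1) + a n / ((k : ℝ) + 1)
          > Real.log 2 + a n / ((k : ℝ) + 1) := by linarith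
      linarith
    have hnn : 0 ≤ Real.log ((n : ℝ) + 1) / a n :=
      div_nonneg (Real.log_nonneg (by linarith [Nat.cast_nonneg (α := ℝ) n])) hapos.le
    rw [dist_zero_right, Real.norm_eq_abs, abs_of_nonneg hnn]
    linarith
  tfae_finish
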